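/- For every σ ≥ 0, the infimum over u ∈ (0,1) of (σ + 1 − √(1 − u))/u equals (1 + σ + √(σ·(2+σ)))/2. -/
import Mathlib

/-- for every `σ ≥ 0`,
`inf_{u ∈ (0,1)} (σ + 1 − √(1 − u))/u = (1 + σ + √(σ(2+σ)))/2`. -/
theorem normalized_risk_sensitivity_optimization (σ : ℝ) (hσ : 0 ≤ σ) :
    sInf {y : ℝ | ∃ u : ℝ, 0 < u ∧ u < 1 ∧ y = (σ + 1 - Real.sqrt (1 - u)) / u} =
      (1 + σ + Real.sqrt (σ * (2 + σ))) / 2 := by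
  set S := {y : ℝ | ∃ u : ℝ, 0 < u ∧ u < 1 ∧ y = (σ + 1 - Real.sqrt (1 - u)) / u} with hS
  set s := Real.sqrt (σ * (2 + σ)) with hsdef
  clear_value S
  have hs0 : 0 ≤ s := Real.sqrt_nonneg _
  have hs2 : s ^ 2 = σ * (2 + σ) := Real.sq_sqrt (by positivity)
  clear_value s
  -- lower bound
  have hlb : ∀ y ∈ S, (1 + σ + s) / 2 ≤ y := by
    intro y hy
    rw [hS] at hy
    obtain ⟨u, hu0, hu1, rfl⟩ := hy
    have h1u : (0:ℝ) ≤ 1 - u := by linarith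
    have ht2 : (Real.sqrt (1 - u)) ^ 2 = 1 - u := Real.sq_sqrt h1u
    set t := Real.sqrt (1 - u) with htdef
    have ht0 : 0 ≤ t := Real.sqrt_nonneg _
    clear_value t
    have hc : (0:ℝ) < σ + 1 + s := by linarith
    have h1 : (σ + 1 + s) * (σ + 1 - s) = 1 := by nlinarith
    rw [div_le_div_iff₀ (by norm_num) hu0]
    have hu : u = 1 - t ^ 2 := by linarith
    rw [hu]
    nlinarith [sq_nonneg ((σ + 1 + s) * t - 1), h1, hc]
  have hne : S.Nonempty := ⟨(σ + 1 - Real.sqrt (1 - 1/2)) / (1/2),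
    by rw [hS]; exact ⟨1/2, by norm_num⟩⟩
  have hbdd : BddBelow S := ⟨(1 + σ + s) / 2, hlb⟩
  rcases eq_or_lt_of_le hσ with h0 | h0
  · -- σ = 0
    subst h0
    have hs' : s = 0 := by nlinarith [sq_nonneg s]
    subst hs'
    norm_num
    norm_num at hlb
    apply le_antisymm
    · rw [Real.sInf_le_iff hbdd hne]
      intro ε hε
      set δ := min ε 1 / 2 with hδ
      have hδ0 : 0 < δ := by positivity
      have hδ1 : δ < 1 := by
        have := min_le_right ε 1
        rw [hδ]; linarith
      refine ⟨1 / (2 - δ), ?_, ?_⟩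
      · rw [hS]
        refine ⟨1 - (1 - δ)^2, by nlinarith, by nlinarith, ?_⟩
        have h1 : 1 - (1 - (1 - δ)^2) = (1 - δ)^2 := by ring
        rw [h1, Real.sqrt_sq (by linarith)]
        rw [div_eq_div_iff (by linarith : (0:ℝ) < 2 - δ).ne' (by nlinarith : (0:ℝ) < 1 - (1-δ)^2).ne']
        ring
      · rw [div_lt_iff₀ (by linarith)]
        have hd : δ < 4 * ε / (1 + 2 * ε) := by
          rcases le_or_gt ε 1 with h | h
          · have : δ = ε / 2 := by rw [hδ, min_eq_left h]
            rw [this, div_lt_div_iff₀ (by norm_num) (by linarith)]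
            nlinarith
          · have : δ = 1 / 2 := by rw [hδ, min_eq_right (le_of_lt h)]
            rw [this, div_lt_div_iff₀ (by norm_num) (by linarith)]
            nlinarith
        rw [div_lt_div_iff₀ (by norm_num) (by linarith)] at hd
        nlinarith
    · exact le_csInf hne hlb
  · -- σ > 0
    have hspos : 0 < s := by nlinarith
    set t := σ + 1 - s with htdef
    have ht0 : 0 < t := by nlinarith
    have ht1 : t < 1 := by nlinarith
    have hmem : (1 + σ + s) / 2 ∈ S := by
      rw [hS]
      refine ⟨1 - t^2, by nlinarith, by nlinarith, ?_⟩
      have h1 : 1 - (1 - t^2) = t^2 := by ring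
      rw [h1, Real.sqrt_sq (le_of_lt ht0)]
      rw [div_eq_div_iff (by norm_num : (2:ℝ) ≠ 0) (by nlinarith : (0:ℝ) < 1 - t^2).ne']
      nlinarith [hs2]
    exact le_antisymm (csInf_le hbdd hmem) (le_csInf hne hlb)
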